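/- Let h, j, s, r be integers with 1 ≤ s ≤ j−1 and 0 ≤ r ≤ j−2, and let ρ ∈ S_h be a permutation whose cycle type is Multiset.replicate r 2 + {j+1−r} (r disjoint transpositions and one cycle of length j+1−r ≥ 3). Then the number of pairs (σ, τ) of permutations of S_h with σ of cycle type Multiset.replicate s 2, τ of cycle type {j+1−s}, and στ = ρ, when multiplied by (j+1−s), equals (j+1−r)·binom(j+1−s, s−r). Equivalently, this number of factorizations equals ((j+1−r)/(j+1−s))·binom(j+1−s, s−r). -/

import Mathlib

/-- The binomial coefficient `binom a b` for integer arguments, equal to `0`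
when `b < 0` or `b > a`. -/
def binom (a b : ℤ) : ℕ :=
  if 0 ≤ b ∧ b ≤ a then a.toNat.choose b.toNat else 0

set_option linter.unusedSectionVars false
set_option maxHeartbeats 1000000

open Finset

/-- Subsets of `{0,...,l-1}` of size `k` with no two consecutive elements. -/
def pathSets (l k : ℕ) : Finset (Finset ℕ) :=
  (Finset.range l).powerset.filter (fun S => S.card = k ∧ ∀ i ∈ S, i + 1 ∉ S)

lemma mem_pathSets {l k : ℕ} {S : Finset ℕ} :
    S ∈ pathSets l k ↔ S ⊆ Finset.range l ∧ S.card = k ∧ ∀ i ∈ S, i + 1 ∉ S := by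
  simp [pathSets, and_assoc]

lemma pathSets_k0 (l : ℕ) : pathSets l 0 = {∅} := by
  ext S
  simp only [mem_pathSets, Finset.mem_singleton, Finset.card_eq_zero]
  constructor
  · rintro ⟨-, h, -⟩; exact h
  · rintro rfl; simp

lemma pathSets_split (l k : ℕ) :
    (pathSets (l+2) (k+1)).card = (pathSets (l+1) (k+1)).card + (pathSets l k).card := by
  have key : pathSets (l+2) (k+1)
      = (pathSets (l+1) (k+1)) ∪ ((pathSets l k).image (insert (l+1))) := by
    ext S
    simp only [Finset.mem_union, Finset.mem_image, mem_pathSets]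
    constructor
    · rintro ⟨hsub, hcard, hcond⟩
      by_cases hl : l + 1 ∈ S
      · right
        refine ⟨S.erase (l+1), ⟨?_, ?_, ?_⟩, ?_⟩
        · intro x hx
          have hx1 := Finset.mem_of_mem_erase hx
          have hx2 := Finset.ne_of_mem_erase hx
          have hx3 : x ≠ l := by
            rintro rfl
            exact hcond x hx1 hl
          have := Finset.mem_range.1 (hsub hx1)
          rw [Finset.mem_range]
          omega
        · rw [Finset.card_erase_of_mem hl, hcard]; omega
        · intro i hi
          exact fun hc => hcond i (Finset.mem_of_mem_erase hi) (Finset.mem_of_mem_erase hc)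
        · exact Finset.insert_erase hl
      · left
        refine ⟨?_, hcard, hcond⟩
        intro x hx
        have := Finset.mem_range.1 (hsub hx)
        have : x ≠ l + 1 := fun h => hl (h ▸ hx)
        rw [Finset.mem_range]; omega
    · rintro (⟨hsub, hcard, hcond⟩ | ⟨T, ⟨hsub, hcard, hcond⟩, rfl⟩)
      · exact ⟨hsub.trans (by intro x; simp only [Finset.mem_range]; omega), hcard, hcond⟩
      · have hTl : l + 1 ∉ T := fun h => by
          have := Finset.mem_range.1 (hsub h); omega
        refine ⟨?_, ?_, ?_⟩
        · intro x hx
          rcases Finset.mem_insert.1 hx with rfl | hx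
          · simp
          · have := Finset.mem_range.1 (hsub hx)
            rw [Finset.mem_range]; omega
        · rw [Finset.card_insert_of_notMem hTl, hcard]
        · intro i hi
          rcases Finset.mem_insert.1 hi with rfl | hi
          · intro hc
            rcases Finset.mem_insert.1 hc with h | h
            · omega
            · have := Finset.mem_range.1 (hsub h); omega
          · intro hc
            rcases Finset.mem_insert.1 hc with h | h
            · have := Finset.mem_range.1 (hsub hi); omega
            · exact hcond i hi h
  rw [key, Finset.card_union_of_disjoint, Finset.card_image_of_injOn]
  · intro T₁ h₁ T₂ h₂ heq
    have h₁' : l + 1 ∉ T₁ := fun h => by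
      have := Finset.mem_range.1 ((mem_pathSets.1 h₁).1 h); omega
    have h₂' : l + 1 ∉ T₂ := fun h => by
      have := Finset.mem_range.1 ((mem_pathSets.1 h₂).1 h); omega
    have := congrArg (fun S => Finset.erase S (l+1)) heq
    simpa [Finset.erase_insert h₁', Finset.erase_insert h₂'] using this
  · rw [Finset.disjoint_left]
    intro S hS hS2
    rw [Finset.mem_image] at hS2
    obtain ⟨T, hT, rfl⟩ := hS2
    have := Finset.mem_range.1 ((mem_pathSets.1 hS).1 (Finset.mem_insert_self (l+1) T))
    omega

lemma pathSets_card (l k : ℕ) : (pathSets l k).card = Nat.choose (l + 1 - k) k := by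
  induction l using Nat.strong_induction_on generalizing k with
  | _ l ih =>
    match l, k with
    | l, 0 => simp [pathSets_k0]
    | 0, (k+1) =>
      have : pathSets 0 (k+1) = ∅ := by
        ext S
        simp only [mem_pathSets, Finset.notMem_empty, iff_false, not_and]
        intro hsub hcard
        have : S = ∅ := Finset.subset_empty.1 (by simpa using hsub)
        simp [this] at hcard
      simp [this]
    | 1, (k+1) =>
      match k with
      | 0 =>
        have : pathSets 1 1 = {{0}} := by
          ext S
          simp only [mem_pathSets, Finset.mem_singleton]
          constructor
          · rintro ⟨hsub, hcard, -⟩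
            rw [Finset.card_eq_one] at hcard
            obtain ⟨a, rfl⟩ := hcard
            have := Finset.mem_range.1 (hsub (Finset.mem_singleton_self a))
            interval_cases a
            rfl
          · rintro rfl
            refine ⟨by simp, by simp, ?_⟩
            intro i hi
            simp only [Finset.mem_singleton] at hi ⊢
            omega
        simp [this]
      | (k+1) =>
        have : pathSets 1 (k+2) = ∅ := by
          ext S
          simp only [mem_pathSets, Finset.notMem_empty, iff_false, not_and]
          intro hsub hcard
          have h1 := Finset.card_le_card hsub
          simp [hcard] at h1
        rw [this]
        simp only [Finset.card_empty]
        rw [Nat.choose_eq_zero_of_lt (by omega)]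
    | (l+2), (k+1) =>
      rw [pathSets_split, ih (l+1) (by omega), ih l (by omega)]
      rcases Nat.lt_or_ge (l+1) (k+1) with hlt | hge
      · rw [Nat.choose_eq_zero_of_lt (by omega), Nat.choose_eq_zero_of_lt (by omega),
          Nat.choose_eq_zero_of_lt (by omega)]
      · have h1 : l + 2 + 1 - (k+1) = (l + 1 + 1 - (k+1)) + 1 := by omega
        have h2 : l + 1 - k = l + 1 + 1 - (k + 1) := by omega
        rw [h1, h2, Nat.choose_succ_succ']
        omega


def cycSets (n k : ℕ) : Finset (Finset ℕ) :=
  (Finset.range n).powerset.filter (fun S => S.card = k ∧ ∀ i ∈ S, (i + 1) % n ∉ S)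

lemma mem_cycSets {n k : ℕ} {S : Finset ℕ} :
    S ∈ cycSets n k ↔ S ⊆ Finset.range n ∧ S.card = k ∧ ∀ i ∈ S, (i + 1) % n ∉ S := by
  simp [cycSets, and_assoc]

lemma cycSets_k0 (n : ℕ) : cycSets n 0 = {∅} := by
  ext S
  simp only [mem_cycSets, Finset.mem_singleton, Finset.card_eq_zero]
  constructor
  · rintro ⟨-, h, -⟩; exact h
  · rintro rfl; simp


lemma cycSets_split (n k : ℕ) (hn : 3 ≤ n) :
    (cycSets n (k+1)).card = (pathSets (n-1) (k+1)).card + (pathSets (n-3) k).card := by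
  have key : cycSets n (k+1)
      = (pathSets (n-1) (k+1)) ∪ ((pathSets (n-3) k).image
          (fun T => insert (n-1) (T.image (· + 1)))) := by
    ext S
    simp only [Finset.mem_union, Finset.mem_image, mem_pathSets, mem_cycSets]
    constructor
    · rintro ⟨hsub, hcard, hcond⟩
      by_cases hl : n - 1 ∈ S
      · right
        have h0 : 0 ∉ S := by
          have := hcond (n-1) hl
          have hmod : (n - 1 + 1) % n = 0 := by
            have : n - 1 + 1 = n := by omega
            rw [this, Nat.mod_self]
          rwa [hmod] at this
        have hn2 : n - 2 ∉ S := by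
          intro h
          have := hcond (n-2) h
          have hmod : (n - 2 + 1) % n = n - 1 := by
            rw [Nat.mod_eq_of_lt (by omega)]; omega
          rw [hmod] at this
          exact this hl
        refine ⟨(S.erase (n-1)).image (· - 1), ⟨?_, ?_, ?_⟩, ?_⟩
        · intro x hx
          rw [Finset.mem_image] at hx
          obtain ⟨y, hy, rfl⟩ := hx
          have hy1 := Finset.mem_of_mem_erase hy
          have hy2 := Finset.ne_of_mem_erase hy
          have := Finset.mem_range.1 (hsub hy1)
          have hy0 : y ≠ 0 := fun h => h0 (h ▸ hy1)
          have hyn2 : y ≠ n - 2 := fun h => hn2 (h ▸ hy1)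
          rw [Finset.mem_range]; omega
        · have hinj : Set.InjOn (fun x => x - 1) ((S.erase (n-1) : Finset ℕ) : Set ℕ) := by
            intro a ha b hb hab
            simp only [Finset.coe_erase, Set.mem_diff, Finset.mem_coe, Set.mem_singleton_iff] at ha hb
            have ha1 : a ≠ 0 := fun h => h0 (h ▸ ha.1)
            have hb1 : b ≠ 0 := fun h => h0 (h ▸ hb.1)
            simp only at hab
            omega
          rw [Finset.card_image_of_injOn hinj, Finset.card_erase_of_mem hl, hcard]
          omega
        · intro i hi hc
          rw [Finset.mem_image] at hi hc
          obtain ⟨y, hy, rfl⟩ := hi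
          obtain ⟨z, hz, hz2⟩ := hc
          have hy1 := Finset.mem_of_mem_erase hy
          have hz1 := Finset.mem_of_mem_erase hz
          have hy0 : y ≠ 0 := fun h => h0 (h ▸ hy1)
          have hz0 : z ≠ 0 := fun h => h0 (h ▸ hz1)
          have hzy : z = y + 1 := by omega
          have := hcond y hy1
          have hylt := Finset.mem_range.1 (hsub hy1)
          have hyn : y ≠ n - 1 := Finset.ne_of_mem_erase hy
          have hmod : (y + 1) % n = y + 1 := Nat.mod_eq_of_lt (by omega)
          rw [hmod] at this
          exact this (hzy ▸ hz1)
        · -- S = insert (n-1) (image (·+1) (image (·-1) (S.erase (n-1))))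
          have himg : ((S.erase (n-1)).image (· - 1)).image (· + 1) = S.erase (n-1) := by
            ext x
            simp only [Finset.mem_image]
            constructor
            · rintro ⟨y, ⟨z, hz, rfl⟩, rfl⟩
              have hz0 : z ≠ 0 := fun h => h0 (h ▸ Finset.mem_of_mem_erase hz)
              have : z - 1 + 1 = z := by omega
              rwa [this]
            · intro hx
              have hx0 : x ≠ 0 := fun h => h0 (h ▸ Finset.mem_of_mem_erase hx)
              exact ⟨x - 1, ⟨x, hx, rfl⟩, by omega⟩
          rw [himg, Finset.insert_erase hl]
      · left
        refine ⟨?_, hcard, ?_⟩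
        · intro x hx
          have := Finset.mem_range.1 (hsub hx)
          have : x ≠ n - 1 := fun h => hl (h ▸ hx)
          rw [Finset.mem_range]; omega
        · intro i hi
          have hilt := Finset.mem_range.1 (hsub hi)
          have hin : i ≠ n - 1 := fun h => hl (h ▸ hi)
          have := hcond i hi
          rwa [Nat.mod_eq_of_lt (by omega)] at this
    · rintro (⟨hsub, hcard, hcond⟩ | ⟨T, ⟨hsub, hcard, hcond⟩, rfl⟩)
      · refine ⟨hsub.trans (by intro x; simp only [Finset.mem_range]; omega), hcard, ?_⟩
        intro i hi
        have := Finset.mem_range.1 (hsub hi)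
        rw [Nat.mod_eq_of_lt (by omega)]
        exact hcond i hi
      · have hmemT : ∀ x ∈ T.image (· + 1), 1 ≤ x ∧ x ≤ n - 3 := by
          intro x hx
          rw [Finset.mem_image] at hx
          obtain ⟨y, hy, rfl⟩ := hx
          have := Finset.mem_range.1 (hsub hy)
          omega
        have hnotmem : n - 1 ∉ T.image (· + 1) := by
          intro h
          have := hmemT _ h
          omega
        refine ⟨?_, ?_, ?_⟩
        · intro x hx
          rcases Finset.mem_insert.1 hx with rfl | hx
          · rw [Finset.mem_range]; omega
          · have := hmemT _ hx
            rw [Finset.mem_range]; omega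
        · rw [Finset.card_insert_of_notMem hnotmem,
            Finset.card_image_of_injOn (fun a _ b _ hab => by omega), hcard]
        · intro i hi hc
          rcases Finset.mem_insert.1 hi with rfl | hi
          · have hmod : (n - 1 + 1) % n = 0 := by
              have : n - 1 + 1 = n := by omega
              rw [this, Nat.mod_self]
            rw [hmod] at hc
            rcases Finset.mem_insert.1 hc with h | h
            · omega
            · have := hmemT _ h; omega
          · have hb := hmemT _ hi
            have hmod : (i + 1) % n = i + 1 := Nat.mod_eq_of_lt (by omega)
            rw [hmod] at hc
            rcases Finset.mem_insert.1 hc with h | h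
            · omega
            · rw [Finset.mem_image] at hi h
              obtain ⟨y, hy, rfl⟩ := hi
              obtain ⟨z, hz, hz2⟩ := h
              have : z = y + 1 := by omega
              exact hcond y hy (this ▸ hz)
  rw [key, Finset.card_union_of_disjoint, Finset.card_image_of_injOn]
  · intro T₁ h₁ T₂ h₂ heq
    have herase : ∀ T, T ∈ pathSets (n-3) k → (insert (n-1) (T.image (· + 1))).erase (n-1)
        = T.image (· + 1) := by
      intro T hT
      rw [Finset.erase_insert]
      intro h
      rw [Finset.mem_image] at h
      obtain ⟨y, hy, hy2⟩ := h
      have := Finset.mem_range.1 ((mem_pathSets.1 hT).1 hy)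
      omega
    have := congrArg (fun S => Finset.erase S (n-1)) heq
    simp only [herase T₁ h₁, herase T₂ h₂] at this
    ext x
    constructor
    · intro hx
      have : x + 1 ∈ T₂.image (· + 1) := this ▸ (Finset.mem_image_of_mem _ hx)
      rw [Finset.mem_image] at this
      obtain ⟨y, hy, hy2⟩ := this
      have : y = x := by omega
      exact this ▸ hy
    · intro hx
      have : x + 1 ∈ T₁.image (· + 1) := this ▸ (Finset.mem_image_of_mem _ hx)
      rw [Finset.mem_image] at this
      obtain ⟨y, hy, hy2⟩ := this
      have : y = x := by omega
      exact this ▸ hy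
  · rw [Finset.disjoint_left]
    intro S hS hS2
    rw [Finset.mem_image] at hS2
    obtain ⟨T, hT, rfl⟩ := hS2
    have := Finset.mem_range.1 ((mem_pathSets.1 hS).1 (Finset.mem_insert_self (n-1) _))
    omega


lemma cycSets_count (n k : ℕ) (hn : 3 ≤ n) (hk : k + 2 ≤ n) :
    (cycSets n k).card * (n - k) = n * Nat.choose (n - k) k := by
  match k with
  | 0 => simp [cycSets_k0]
  | (k+1) =>
    rw [cycSets_split n k hn, pathSets_card, pathSets_card]
    set a := n - (k+1) with ha
    have ha2 : 2 ≤ a := by omega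
    have e1 : n - 1 + 1 - (k+1) = a := by omega
    have e2 : n - 3 + 1 - k = a - 1 := by omega
    rw [e1, e2]
    have hD : a * Nat.choose (a-1) k = Nat.choose a (k+1) * (k+1) := by
      have := Nat.add_one_mul_choose_eq (a-1) k
      have h1 : (a-1).succ = a := by omega
      have h2 : a - 1 + 1 = a := by omega
      rw [h2] at this
      exact this
    calc (Nat.choose a (k+1) + Nat.choose (a-1) k) * a
        = Nat.choose a (k+1) * a + a * Nat.choose (a-1) k := by ring
      _ = Nat.choose a (k+1) * a + Nat.choose a (k+1) * (k+1) := by rw [hD]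
      _ = Nat.choose a (k+1) * (a + (k+1)) := by ring
      _ = n * Nat.choose a (k+1) := by
          have : a + (k+1) = n := by omega
          rw [this]; ring


open Equiv Equiv.Perm Finset

variable {α : Type*} [DecidableEq α] [Fintype α]

/-- A permutation whose cycle type consists only of 2s is an involution. -/
lemma mul_self_eq_one_of_cycleType {f : Perm α} {t : ℕ}
    (h : f.cycleType = Multiset.replicate t 2) : f * f = 1 := by
  rcases Nat.eq_zero_or_pos t with rfl | ht
  · rw [Multiset.replicate_zero, Equiv.Perm.cycleType_eq_zero] at h
    rw [h]; simp
  · have hord : orderOf f = 2 := by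
      rw [← Equiv.Perm.lcm_cycleType, h]
      apply Nat.dvd_antisymm
      · apply Multiset.lcm_dvd.2
        intro x hx
        rw [Multiset.eq_of_mem_replicate hx]
      · apply Multiset.dvd_lcm
        exact Multiset.mem_replicate.2 ⟨by omega, rfl⟩
    have := pow_orderOf_eq_one f
    rw [hord, pow_two] at this
    exact this

lemma invol_apply {f : Perm α} (h : f * f = 1) (x : α) : f (f x) = x := by
  have := congrArg (fun g => g x) h
  simpa [Equiv.Perm.mul_apply] using this

/-- For a cycle of length at least 3, `c (c x) ≠ x` for `x` in the support. -/
lemma cycle_sq_ne {c : Perm α} (hc : c.IsCycle) (h3 : 3 ≤ c.support.card) {x : α}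
    (hx : x ∈ c.support) : c (c x) ≠ x := by
  intro he
  have horb : ∀ i : ℕ, (c ^ i) x ∈ ({x, c x} : Finset α) := by
    intro i
    induction i with
    | zero => simp
    | succ i ih =>
      rw [pow_succ', Equiv.Perm.mul_apply]
      rcases Finset.mem_insert.1 ih with h | h
      · rw [h]; simp
      · rw [Finset.mem_singleton] at h
        rw [h, he]; simp
  have hsub : c.support ⊆ {x, c x} := by
    intro y hy
    obtain ⟨i, hi⟩ := hc.exists_pow_eq (Equiv.Perm.mem_support.1 hx) (Equiv.Perm.mem_support.1 hy)
    exact hi ▸ horb i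
  have := Finset.card_le_card hsub
  have h2 : ({x, c x} : Finset α).card ≤ 2 := Finset.card_insert_le _ _ |>.trans (by simp)
  omega

/-- Product of the transpositions `(b, c b)` for `b ∈ A`. -/
noncomputable def swapProd (c : Perm α) (A : Finset α) : Perm α :=
  (A.val.toList.map (fun b => Equiv.swap b (c b))).prod

section swapProdLemmas

variable {c : Perm α} {A : Finset α}

lemma swaps_disjoint (hA : A ⊆ c.support) (hadj : ∀ b ∈ A, c b ∉ A)
    {a b : α} (ha : a ∈ A) (hb : b ∈ A) (hab : a ≠ b) :
    Equiv.Perm.Disjoint (Equiv.swap a (c a)) (Equiv.swap b (c b)) := by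
  have hca : c a ≠ a := Equiv.Perm.mem_support.1 (hA ha)
  have hcb : c b ≠ b := Equiv.Perm.mem_support.1 (hA hb)
  rw [Equiv.Perm.disjoint_iff_disjoint_support, Equiv.Perm.support_swap hca.symm,
    Equiv.Perm.support_swap hcb.symm, Finset.disjoint_left]
  intro x hx hx2
  simp only [Finset.mem_insert, Finset.mem_singleton] at hx hx2
  have h1 : a ≠ c b := fun h => hadj b hb (h ▸ ha)
  have h2 : c a ≠ b := fun h => hadj a ha (h ▸ hb)
  have h3 : c a ≠ c b := fun h => hab (c.injective h)
  rcases hx with rfl | rfl <;> rcases hx2 with h | h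
  · exact hab h
  · exact h1 h
  · exact h2 h
  · exact h3 h

lemma mem_swapList_iff {g : Perm α} :
    g ∈ (A.val.toList.map (fun b => Equiv.swap b (c b))) ↔ ∃ b ∈ A, g = Equiv.swap b (c b) := by
  simp only [List.mem_map, Multiset.mem_toList, ← Finset.mem_def]
  tauto

lemma swapList_nodup : (A.val.toList).Nodup := by
  rw [← Multiset.coe_nodup, Multiset.coe_toList]
  exact A.nodup

lemma swapList_pairwise (hA : A ⊆ c.support) (hadj : ∀ b ∈ A, c b ∉ A) :
    (A.val.toList.map (fun b => Equiv.swap b (c b))).Pairwise Equiv.Perm.Disjoint := by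
  rw [List.pairwise_map]
  have hnd : (A.val.toList).Pairwise (· ≠ ·) := swapList_nodup
  apply List.Pairwise.imp_of_mem ?_ hnd
  intro a b ha hb hab
  rw [Multiset.mem_toList, ← Finset.mem_def] at ha hb
  exact swaps_disjoint hA hadj ha hb hab

end swapProdLemmas

lemma listprod_apply_fixed : ∀ (L : List (Perm α)) (y : α), (∀ g ∈ L, g y = y) → L.prod y = y := by
  intro L
  induction L with
  | nil => intro y _; simp
  | cons g t ih =>
    intro y hy
    rw [List.prod_cons, Equiv.Perm.mul_apply, ih y (fun g' hg' => hy g' (List.mem_cons_of_mem _ hg')),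
      hy g List.mem_cons_self]

lemma listprod_apply_mem : ∀ (L : List (Perm α)), L.Pairwise Equiv.Perm.Disjoint →
    ∀ (g : Perm α), g ∈ L → ∀ (y : α), g y ≠ y → L.prod y = g y := by
  intro L
  induction L with
  | nil => intro _ g hg; simp at hg
  | cons f t ih =>
    intro hL g hg y hy
    rw [List.pairwise_cons] at hL
    rcases List.mem_cons.1 hg with rfl | hg
    · rw [List.prod_cons, Equiv.Perm.mul_apply, listprod_apply_fixed t y ?_]
      intro g' hg'
      rcases (hL.1 g' hg') y with h | h
      · exact absurd h hy
      · exact h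
    · rw [List.prod_cons, Equiv.Perm.mul_apply, ih hL.2 g hg y hy]
      rcases (hL.1 g hg) (g y) with h | h
      · exact h
      · exact absurd (g.injective h) hy

section swapProdApply

variable {c : Perm α} {A : Finset α}

lemma swapProd_apply_mem (hA : A ⊆ c.support) (hadj : ∀ b ∈ A, c b ∉ A)
    {b : α} (hb : b ∈ A) : swapProd c A b = c b := by
  have hcb : c b ≠ b := Equiv.Perm.mem_support.1 (hA hb)
  have : Equiv.swap b (c b) b = c b := Equiv.swap_apply_left _ _
  rw [swapProd, listprod_apply_mem _ (swapList_pairwise hA hadj) (Equiv.swap b (c b))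
    (mem_swapList_iff.2 ⟨b, hb, rfl⟩) b (by rw [this]; exact hcb), this]

lemma swapProd_apply_img (hA : A ⊆ c.support) (hadj : ∀ b ∈ A, c b ∉ A)
    {b : α} (hb : b ∈ A) : swapProd c A (c b) = b := by
  have hcb : c b ≠ b := Equiv.Perm.mem_support.1 (hA hb)
  have : Equiv.swap b (c b) (c b) = b := Equiv.swap_apply_right _ _
  rw [swapProd, listprod_apply_mem _ (swapList_pairwise hA hadj) (Equiv.swap b (c b))
    (mem_swapList_iff.2 ⟨b, hb, rfl⟩) (c b) (by rw [this]; exact hcb.symm), this]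

lemma swapProd_apply_notmem (hA : A ⊆ c.support) (hadj : ∀ b ∈ A, c b ∉ A)
    {y : α} (hy : y ∉ A) (hy2 : ∀ b ∈ A, y ≠ c b) : swapProd c A y = y := by
  rw [swapProd]
  apply listprod_apply_fixed
  intro g hg
  obtain ⟨b, hb, rfl⟩ := mem_swapList_iff.1 hg
  exact Equiv.swap_apply_of_ne_of_ne (fun h => hy (h ▸ hb)) (hy2 b hb)

lemma swapProd_support (hA : A ⊆ c.support) (hadj : ∀ b ∈ A, c b ∉ A) :
    (swapProd c A).support = A ∪ A.image c := by
  ext y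
  rw [Equiv.Perm.mem_support, Finset.mem_union, Finset.mem_image]
  constructor
  · intro hy
    by_contra hcon
    push_neg at hcon
    exact hy (swapProd_apply_notmem hA hadj hcon.1 (fun b hb h => (hcon.2 b hb) h.symm))
  · rintro (hy | ⟨b, hb, rfl⟩)
    · rw [swapProd_apply_mem hA hadj hy]
      exact Equiv.Perm.mem_support.1 (hA hy)
    · rw [swapProd_apply_img hA hadj hb]
      exact (Equiv.Perm.mem_support.1 (hA hb)).symm

lemma swapProd_cycleType (hA : A ⊆ c.support) (hadj : ∀ b ∈ A, c b ∉ A) :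
    (swapProd c A).cycleType = Multiset.replicate A.card 2 := by
  rw [swapProd, Equiv.Perm.cycleType_eq (A.val.toList.map (fun b => Equiv.swap b (c b))) rfl ?_
    (swapList_pairwise hA hadj)]
  · rw [List.map_map]
    apply Multiset.eq_replicate.2
    constructor
    · simp
    · intro x hx
      rw [Multiset.mem_coe, List.mem_map] at hx
      obtain ⟨b, hb, rfl⟩ := hx
      rw [Multiset.mem_toList, ← Finset.mem_def] at hb
      have hcb : c b ≠ b := Equiv.Perm.mem_support.1 (hA hb)
      simp only [Function.comp_apply]
      rw [Equiv.Perm.support_swap hcb.symm, Finset.card_insert_of_notMem (by simpa using hcb.symm),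
        Finset.card_singleton]
  · intro g hg
    obtain ⟨b, hb, rfl⟩ := mem_swapList_iff.1 hg
    exact Equiv.Perm.isCycle_swap (Equiv.Perm.mem_support.1 (hA hb)).symm

lemma swapProd_mul_self (hA : A ⊆ c.support) (hadj : ∀ b ∈ A, c b ∉ A) :
    swapProd c A * swapProd c A = 1 :=
  mul_self_eq_one_of_cycleType (swapProd_cycleType hA hadj)

end swapProdApply

lemma swapProd_congr {c₁ c : Perm α} {A : Finset α} (h : ∀ b ∈ A, c₁ b = c b) :
    swapProd c₁ A = swapProd c A := by
  rw [swapProd, swapProd]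
  congr 1
  apply List.map_congr_left
  intro b hb
  rw [Multiset.mem_toList, ← Finset.mem_def] at hb
  rw [h b hb]

lemma swapProd_peel {c : Perm α} {A : Finset α} (hA : A ⊆ c.support)
    (hadj : ∀ b ∈ A, c b ∉ A) {x : α} (hx : x ∈ A) :
    swapProd c A = swapProd c (A.erase x) * Equiv.swap x (c x) := by
  have hperm : List.Perm (A.val.toList.map (fun b => Equiv.swap b (c b)))
      (((A.erase x).val.toList.map (fun b => Equiv.swap b (c b))) ++ [Equiv.swap x (c x)]) := by
    rw [← Multiset.coe_eq_coe]
    have e1 : ∀ (B : Finset α), (↑(B.val.toList.map (fun b => Equiv.swap b (c b)))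
        : Multiset (Perm α)) = B.val.map (fun b => Equiv.swap b (c b)) := fun B => by
      rw [← Multiset.map_coe, Multiset.coe_toList]
    rw [← Multiset.coe_add, e1, e1, Multiset.coe_singleton, Finset.erase_val,
      ← Multiset.cons_erase (Finset.mem_def.1 hx), Multiset.map_cons, add_comm,
      Multiset.singleton_add, Multiset.erase_cons_head]
  have := List.Perm.prod_eq' hperm ((swapList_pairwise hA hadj).imp (fun h => h.commute))
  rw [swapProd, this, List.prod_append, List.prod_singleton, swapProd]

lemma swapProd_mul_cycle :
    ∀ (k : ℕ) (c : Perm α) (A : Finset α), A.card = k → c.IsCycle → A ⊆ c.support →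
    (∀ b ∈ A, c b ∉ A) → A.card + 2 ≤ c.support.card →
    (swapProd c A * c).IsCycle ∧ (swapProd c A * c).support = c.support \ A := by
  intro k
  induction k with
  | zero =>
    intro c A hcard hc hA hadj hle
    rw [Finset.card_eq_zero] at hcard
    subst hcard
    have : swapProd c ∅ = 1 := by rw [swapProd]; simp
    rw [this, one_mul, Finset.sdiff_empty]
    exact ⟨hc, rfl⟩
  | succ k ih =>
    intro c A hcard hc hA hadj hle
    obtain ⟨x, hx⟩ := Finset.card_pos.1 (by omega : 0 < A.card)
    have hxs : x ∈ c.support := hA hx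
    have hcx : c x ≠ x := Equiv.Perm.mem_support.1 hxs
    have h3 : 3 ≤ c.support.card := by omega
    have hccx : c (c x) ≠ x := cycle_sq_ne hc h3 hxs
    set c₁ := Equiv.swap x (c x) * c with hc₁def
    have hc₁ : c₁.IsCycle := hc.swap_mul hcx hccx
    have hc₁supp : c₁.support = c.support \ {x} := Equiv.Perm.support_swap_mul_eq c x hccx
    set A' := A.erase x with hA'def
    have hagree : ∀ b ∈ A', c₁ b = c b := by
      intro b hb
      have hbx : b ≠ x := Finset.ne_of_mem_erase hb
      have hbA : b ∈ A := Finset.mem_of_mem_erase hb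
      have h1 : c b ≠ x := by
        intro h
        exact hadj b hbA (h ▸ hx)
      have h2 : c b ≠ c x := fun h => hbx (c.injective h)
      rw [hc₁def, Equiv.Perm.mul_apply, Equiv.swap_apply_of_ne_of_ne h1 h2]
    have hA'sub : A' ⊆ c₁.support := by
      intro b hb
      rw [hc₁supp, Finset.mem_sdiff, Finset.mem_singleton]
      exact ⟨hA (Finset.mem_of_mem_erase hb), Finset.ne_of_mem_erase hb⟩
    have hA'adj : ∀ b ∈ A', c₁ b ∉ A' := by
      intro b hb h
      rw [hagree b hb] at h
      exact hadj b (Finset.mem_of_mem_erase hb) (Finset.mem_of_mem_erase h)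
    have hA'card : A'.card = k := by
      rw [hA'def, Finset.card_erase_of_mem hx, hcard]
      omega
    have hA'le : A'.card + 2 ≤ c₁.support.card := by
      rw [hA'card, hc₁supp, Finset.card_sdiff_of_subset (by simpa using hxs), Finset.card_singleton]
      omega
    have hprod : swapProd c A * c = swapProd c₁ A' * c₁ := by
      rw [swapProd_peel hA hadj hx, swapProd_congr hagree, hc₁def, mul_assoc]
    obtain ⟨h1, h2⟩ := ih c₁ A' hA'card hc₁ hA'sub hA'adj hA'le
    rw [hprod]
    refine ⟨h1, ?_⟩
    rw [h2, hc₁supp]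
    ext y
    simp only [Finset.mem_sdiff, Finset.mem_singleton, hA'def, Finset.mem_erase]
    constructor
    · rintro ⟨⟨hy1, hy2⟩, hy3⟩
      exact ⟨hy1, fun h => hy3 ⟨hy2, h⟩⟩
    · rintro ⟨hy1, hy2⟩
      by_cases hyx : y = x
      · exact absurd (hyx ▸ hx) hy2
      · exact ⟨⟨hy1, hyx⟩, fun h => hy2 h.2⟩

section Structure

variable {ρ δ c : Perm α} {r k m n : ℕ}

/-- Forward structure lemma: any factorization has the canonical form. -/
lemma structure_fwd (hdc : Equiv.Perm.Disjoint δ c) (hρ : ρ = δ * c)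
    (hδ : δ.cycleType = Multiset.replicate r 2) (hc : c.IsCycle)
    (hn : c.support.card = n) (hn3 : 3 ≤ n) (hm2 : 2 ≤ m) (hnm : n = m + k)
    {σ : Perm α} (hσ : σ.cycleType = Multiset.replicate (r + k) 2)
    (hτ : (σ * ρ).cycleType = {m}) :
    (c.support.filter (fun b => σ b = c b)).card = k ∧
    (∀ b ∈ c.support.filter (fun b => σ b = c b), c b ∉ c.support.filter (fun b => σ b = c b)) ∧
    σ = δ * swapProd c (c.support.filter (fun b => σ b = c b)) := by
  have hσ2 : σ * σ = 1 := mul_self_eq_one_of_cycleType hσ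
  have sapp : ∀ x, σ (σ x) = x := invol_apply hσ2
  set τ := σ * ρ with hτdef
  have hρτ : σ * τ = ρ := by rw [hτdef, ← mul_assoc, hσ2, one_mul]
  have hτap : ∀ y, τ y = σ (ρ y) := fun y => rfl
  have hρap : ∀ y, ρ y = σ (τ y) := by
    intro y
    conv_lhs => rw [← hρτ]
    rfl
  have hds : _root_.Disjoint δ.support c.support :=
    Equiv.Perm.disjoint_iff_disjoint_support.1 hdc
  have hδcard : δ.support.card = 2 * r := by
    rw [← Equiv.Perm.sum_cycleType, hδ, Multiset.sum_replicate, smul_eq_mul]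
    ring
  have hσcard : σ.support.card = 2 * (r + k) := by
    rw [← Equiv.Perm.sum_cycleType, hσ, Multiset.sum_replicate, smul_eq_mul]
    ring
  have hτcard : τ.support.card = m := by
    rw [← Equiv.Perm.sum_cycleType, hτ, Multiset.sum_singleton]
  have hρsupp : ρ.support = δ.support ∪ c.support := by rw [hρ, hdc.support_mul]
  have hρcard : ρ.support.card = 2 * r + n := by
    rw [hρsupp, Finset.card_union_of_disjoint hds, hδcard, hn]
  have hρc : ∀ y ∈ c.support, ρ y = c y := by
    intro y hy
    rw [hρ, Equiv.Perm.mul_apply, Equiv.Perm.notMem_support.1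
      (Finset.disjoint_right.1 hds (Equiv.Perm.apply_mem_support.2 hy))]
  have hρδ : ∀ y ∈ δ.support, ρ y = δ y := by
    intro y hy
    rw [hρ, Equiv.Perm.mul_apply, Equiv.Perm.notMem_support.1
      (Finset.disjoint_left.1 hds hy)]
  have hδmem : ∀ y, y ∈ ρ.support → ρ (ρ y) = y → y ∈ δ.support := by
    intro y hy hyy
    rcases Finset.mem_union.1 (hρsupp ▸ hy) with h | h
    · exact h
    · exfalso
      rw [hρc y h, hρc (c y) (Equiv.Perm.apply_mem_support.2 h)] at hyy
      exact cycle_sq_ne hc (hn ▸ hn3) h hyy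
  set Sσ := σ.support with hSσ
  set Sτ := τ.support with hSτ
  set D := Sσ \ Sτ with hD
  set I := Sσ ∩ Sτ with hI
  set D₀ := D.filter (fun y => σ y ∈ D) with hD₀
  set D₁ := D \ D₀ with hD₁
  have f1 : ∀ y ∈ D, ρ y = σ y := by
    intro y hy
    rw [hρap y, Equiv.Perm.notMem_support.1 (Finset.mem_sdiff.1 hy).2]
  have f2 : D ⊆ ρ.support := by
    intro y hy
    rw [Equiv.Perm.mem_support, f1 y hy]
    exact Equiv.Perm.mem_support.1 (Finset.mem_sdiff.1 hy).1
  have f3 : D₀ ⊆ δ.support := by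
    intro y hy
    rw [hD₀, Finset.mem_filter] at hy
    apply hδmem y (f2 hy.1)
    rw [f1 y hy.1, f1 (σ y) hy.2, sapp]
  have f4 : ∀ y ∈ D₁, σ y ∈ I := by
    intro y hy
    rw [hD₁, Finset.mem_sdiff] at hy
    have hyD := hy.1
    have hymem : σ y ∈ Sσ := by
      rw [hSσ, Equiv.Perm.mem_support, sapp]
      exact fun h => (Equiv.Perm.mem_support.1 (Finset.mem_sdiff.1 hyD).1) h.symm
    have : σ y ∉ D := fun h => hy.2 (Finset.mem_filter.2 ⟨hyD, h⟩)
    rw [hI, Finset.mem_inter]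
    refine ⟨hymem, ?_⟩
    by_contra hcon
    exact this (Finset.mem_sdiff.2 ⟨hymem, hcon⟩)
  -- card computations
  have cDI : D.card + I.card = Sσ.card := by
    rw [hD, hI]
    rw [← Finset.card_union_of_disjoint (Finset.disjoint_sdiff_inter _ _),
      Finset.sdiff_union_inter]
  have cU : (Sσ ∪ Sτ).card + I.card = Sσ.card + Sτ.card := Finset.card_union_add_card_inter _ _
  have cρU : ρ.support.card ≤ (Sσ ∪ Sτ).card := by
    apply Finset.card_le_card
    rw [← hρτ]
    exact Equiv.Perm.support_mul_le σ τ
  have cD0 : D₀.card ≤ 2 * r := hδcard ▸ Finset.card_le_card f3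
  have cD1I : D₁.card ≤ I.card := Finset.card_le_card_of_injOn σ f4
    (fun a _ b _ hab => σ.injective hab)
  have cD01 : D₀.card + D₁.card = D.card := by
    have h := Finset.card_sdiff_add_card_eq_card (show D₀ ⊆ D from Finset.filter_subset _ _)
    rw [← hD₁] at h
    omega
  have hIk : I.card = k ∧ D₀.card = 2 * r ∧ D₁.card = k := by
    constructor
    · omega
    constructor
    · omega
    · omega
  obtain ⟨cIk, cD0e, cD1e⟩ := hIk
  have hD0δ : D₀ = δ.support := Finset.eq_of_subset_of_card_le f3 (by omega)
  set A := c.support.filter (fun b => σ b = c b) with hA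
  have hAD1 : A = D₁ := by
    apply Finset.Subset.antisymm
    · intro b hb
      rw [hA, Finset.mem_filter] at hb
      obtain ⟨hbc, hbs⟩ := hb
      have hbσ : b ∈ Sσ := by
        rw [hSσ, Equiv.Perm.mem_support, hbs]
        exact Equiv.Perm.mem_support.1 hbc
      have hbτ : b ∉ Sτ := by
        rw [hSτ, Equiv.Perm.notMem_support, hτap, hρc b hbc, ← hbs, sapp]
      have hbD : b ∈ D := Finset.mem_sdiff.2 ⟨hbσ, hbτ⟩
      have hbD0 : b ∉ D₀ := by
        rw [hD0δ]
        exact fun h => Finset.disjoint_left.1 hds h hbc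
      exact Finset.mem_sdiff.2 ⟨hbD, hbD0⟩
    · intro y hy
      have hyD : y ∈ D := (Finset.mem_sdiff.1 hy).1
      have hyδ : y ∉ δ.support := by
        rw [← hD0δ]
        exact (Finset.mem_sdiff.1 hy).2
      have hyρ : y ∈ ρ.support := f2 hyD
      have hyc : y ∈ c.support := by
        rcases Finset.mem_union.1 (hρsupp ▸ hyρ) with h | h
        · exact absurd h hyδ
        · exact h
      rw [hA, Finset.mem_filter]
      exact ⟨hyc, by rw [← f1 y hyD, hρc y hyc]⟩
  have cA : A.card = k := by rw [hAD1]; exact cD1e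
  have hadjA : ∀ b ∈ A, c b ∉ A := by
    intro b hb hcb
    rw [hA, Finset.mem_filter] at hb hcb
    have h1 : σ (c b) = b := by rw [← hb.2, sapp]
    rw [hcb.2] at h1
    exact cycle_sq_ne hc (hn ▸ hn3) hb.1 h1
  refine ⟨cA, hadjA, ?_⟩
  -- σ = δ * swapProd c A
  have hAsub : A ⊆ c.support := Finset.filter_subset _ _
  have himg : A.image σ = A.image c :=
    Finset.image_congr (fun b hb => (Finset.mem_filter.1 hb).2)
  have hIimg : I = A.image σ := by
    symm
    apply Finset.eq_of_subset_of_card_le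
    · intro y hy
      rw [Finset.mem_image] at hy
      obtain ⟨b, hb, rfl⟩ := hy
      exact f4 b (hAD1 ▸ hb)
    · rw [Finset.card_image_of_injOn (fun a _ b _ hab => σ.injective hab), cA, cIk]
  have hsuppdecomp : Sσ = δ.support ∪ A ∪ A.image c := by
    have h1 : Sσ = D ∪ I := by rw [hD, hI, Finset.sdiff_union_inter]
    have h2 : D = D₀ ∪ D₁ := by
      rw [hD₁, Finset.union_sdiff_of_subset (Finset.filter_subset _ _)]
    rw [h1, h2, hD0δ, hIimg, himg, hAD1]
  ext y
  rw [Equiv.Perm.mul_apply]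
  by_cases hyδ : y ∈ δ.support
  · have hyD0 : y ∈ D₀ := hD0δ ▸ hyδ
    have hyD : y ∈ D := Finset.mem_of_mem_filter _ hyD0
    have hWy : swapProd c A y = y := by
      apply swapProd_apply_notmem hAsub hadjA
      · exact fun h => Finset.disjoint_left.1 hds hyδ (hAsub h)
      · intro b hb h
        exact Finset.disjoint_left.1 hds hyδ
          (h ▸ Equiv.Perm.apply_mem_support.2 (hAsub hb))
    rw [hWy, ← hρδ y hyδ, f1 y hyD]
  · by_cases hyA : y ∈ A
    · have hWy : swapProd c A y = c y := swapProd_apply_mem hAsub hadjA hyA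
      rw [hWy, Equiv.Perm.notMem_support.1 (Finset.disjoint_right.1 hds
        (Equiv.Perm.apply_mem_support.2 (hAsub hyA))), (Finset.mem_filter.1 hyA).2]
    · by_cases hyim : y ∈ A.image c
      · obtain ⟨b, hb, rfl⟩ := Finset.mem_image.1 hyim
        have hWy : swapProd c A (c b) = b := swapProd_apply_img hAsub hadjA hb
        rw [hWy, Equiv.Perm.notMem_support.1 (Finset.disjoint_right.1 hds (hAsub hb)),
          ← (Finset.mem_filter.1 hb).2, sapp]
      · have hyσ : y ∉ Sσ := by
          rw [hsuppdecomp]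
          simp only [Finset.mem_union]
          tauto
        have hWy : swapProd c A y = y := by
          apply swapProd_apply_notmem hAsub hadjA hyA
          intro b hb h
          exact hyim (Finset.mem_image.2 ⟨b, hb, h.symm⟩)
        rw [hWy, Equiv.Perm.notMem_support.1 hyδ]
        exact Equiv.Perm.notMem_support.1 hyσ

end Structure

section Converse

variable {ρ δ c : Perm α} {r k m n : ℕ}

lemma structure_bwd (hdc : Equiv.Perm.Disjoint δ c) (hρ : ρ = δ * c)
    (hδ : δ.cycleType = Multiset.replicate r 2) (hc : c.IsCycle)
    (hn : c.support.card = n) (hn3 : 3 ≤ n) (hm2 : 2 ≤ m) (hnm : n = m + k)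
    {A : Finset α} (hAs : A ⊆ c.support) (hadj : ∀ b ∈ A, c b ∉ A) (hcard : A.card = k) :
    (δ * swapProd c A).cycleType = Multiset.replicate (r + k) 2 ∧
    ((δ * swapProd c A) * ρ).cycleType = {m} ∧
    c.support.filter (fun b => (δ * swapProd c A) b = c b) = A := by
  set W := swapProd c A with hW
  have hds : _root_.Disjoint δ.support c.support :=
    Equiv.Perm.disjoint_iff_disjoint_support.1 hdc
  have hWsupp : W.support = A ∪ A.image c := swapProd_support hAs hadj
  have hWsuppc : W.support ⊆ c.support := by
    rw [hWsupp]
    apply Finset.union_subset hAs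
    intro y hy
    obtain ⟨b, hb, rfl⟩ := Finset.mem_image.1 hy
    exact Equiv.Perm.apply_mem_support.2 (hAs hb)
  have hdW : Equiv.Perm.Disjoint δ W := by
    rw [Equiv.Perm.disjoint_iff_disjoint_support]
    exact Finset.disjoint_of_subset_right hWsuppc hds
  have hδ2 : δ * δ = 1 := mul_self_eq_one_of_cycleType hδ
  have hct : (δ * W).cycleType = Multiset.replicate (r + k) 2 := by
    rw [hdW.cycleType_mul, hδ, swapProd_cycleType hAs hadj, hcard, ← Multiset.replicate_add]
  have hmul : (δ * W) * ρ = W * c := by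
    rw [hρ, ← mul_assoc, mul_assoc δ W δ, ← hdW.commute.eq, ← mul_assoc, hδ2, one_mul]
  obtain ⟨hcyc, hsupp⟩ := swapProd_mul_cycle k c A hcard hc hAs hadj (by omega)
  have hτct : ((δ * W) * ρ).cycleType = {m} := by
    rw [hmul, hcyc.cycleType, hsupp, Finset.card_sdiff_of_subset hAs, hn, hcard]
    have : n - k = m := by omega
    rw [this]
  refine ⟨hct, hτct, ?_⟩
  ext b
  rw [Finset.mem_filter]
  constructor
  · rintro ⟨hbc, hbs⟩
    by_contra hbA
    by_cases hbim : b ∈ A.image c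
    · obtain ⟨a, ha, rfl⟩ := Finset.mem_image.1 hbim
      have hWb : W (c a) = a := swapProd_apply_img hAs hadj ha
      rw [Equiv.Perm.mul_apply, hWb, Equiv.Perm.notMem_support.1
        (Finset.disjoint_right.1 hds (hAs ha))] at hbs
      exact cycle_sq_ne hc (hn ▸ hn3) (hAs ha) hbs.symm
    · have hWb : W b = b := by
        apply swapProd_apply_notmem hAs hadj hbA
        intro a ha h
        exact hbim (Finset.mem_image.2 ⟨a, ha, h.symm⟩)
      rw [Equiv.Perm.mul_apply, hWb, Equiv.Perm.notMem_support.1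
        (Finset.disjoint_right.1 hds hbc)] at hbs
      exact Equiv.Perm.mem_support.1 hbc hbs.symm
  · intro hbA
    refine ⟨hAs hbA, ?_⟩
    rw [Equiv.Perm.mul_apply, swapProd_apply_mem hAs hadj hbA,
      Equiv.Perm.notMem_support.1 (Finset.disjoint_right.1 hds
        (Equiv.Perm.apply_mem_support.2 (hAs hbA)))]

end Converse

section Enumeration

variable {α : Type*} [DecidableEq α] [Fintype α]

lemma cycle_pow_fix {c : Perm α} (hc : c.IsCycle) {n : ℕ} (hn : c.support.card = n)
    {x₀ : α} (hx₀ : x₀ ∈ c.support) {d : ℕ} (hd0 : 0 < d) (hdn : d < n) :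
    (c ^ d) x₀ ≠ x₀ := by
  intro hfix
  have hone : c ^ d = 1 := by
    ext y
    by_cases hy : y ∈ c.support
    · obtain ⟨a, ha⟩ := hc.exists_pow_eq (Equiv.Perm.mem_support.1 hx₀)
        (Equiv.Perm.mem_support.1 hy)
    
      calc (c ^ d) y = (c ^ d) ((c ^ a) x₀) := by rw [ha]
        _ = (c ^ a) ((c ^ d) x₀) := by
            rw [← Equiv.Perm.mul_apply, ← Equiv.Perm.mul_apply, pow_mul_comm]
        _ = (c ^ a) x₀ := by rw [hfix]
        _ = y := ha
        _ = (1 : Perm α) y := rfl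
    · rw [Equiv.Perm.pow_apply_eq_self_of_apply_eq_self (Equiv.Perm.notMem_support.1 hy)]
      rfl
  have hdvd := orderOf_dvd_of_pow_eq_one hone
  rw [hc.orderOf, hn] at hdvd
  exact absurd (Nat.le_of_dvd hd0 hdvd) (by omega)

lemma cycle_pow_injOn {c : Perm α} (hc : c.IsCycle) {n : ℕ} (hn : c.support.card = n)
    {x₀ : α} (hx₀ : x₀ ∈ c.support) :
    ∀ i < n, ∀ j < n, (c ^ i) x₀ = (c ^ j) x₀ → i = j := by
  have key : ∀ i j, i < j → j < n → (c ^ i) x₀ = (c ^ j) x₀ → False := by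
    intro i j hij hjn heq
    apply cycle_pow_fix hc hn hx₀ (show 0 < j - i by omega) (show j - i < n by omega)
    have h1 : (c ^ (j - i)) ((c ^ i) x₀) = (c ^ j) x₀ := by
      rw [← Equiv.Perm.mul_apply, ← pow_add]
      congr 2
      omega
    rw [heq] at h1
    have h2 : (c ^ (j - i)) ((c ^ j) x₀) = (c ^ j) ((c ^ (j - i)) x₀) := by
      rw [← Equiv.Perm.mul_apply, ← Equiv.Perm.mul_apply, pow_mul_comm]
    rw [h2] at h1
    exact (c ^ j).injective h1
  intro i hi j hj hij
  rcases lt_trichotomy i j with h | h | h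
  · exact absurd (key i j h hj hij) id
  · exact h
  · exact absurd (key j i h hi hij.symm) id

lemma card_Asets_eq (c : Perm α) (hc : c.IsCycle) {n : ℕ} (hn : c.support.card = n)
    (hn3 : 3 ≤ n) (k : ℕ) :
    (cycSets n k).card
      = (c.support.powerset.filter (fun A => A.card = k ∧ ∀ b ∈ A, c b ∉ A)).card := by
  obtain ⟨x₀, hx₀⟩ := Finset.card_pos.1 (show 0 < c.support.card by omega)
  have horder : orderOf c = n := hc.orderOf.trans hn
  set φ : ℕ → α := fun i => (c ^ i) x₀ with hφ
  have hinj := cycle_pow_injOn hc hn hx₀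
  have himg : (Finset.range n).image φ = c.support := by
    ext y
    rw [Finset.mem_image]
    constructor
    · rintro ⟨i, hi, rfl⟩
      exact Equiv.Perm.pow_apply_mem_support.2 hx₀
    · intro hy
      obtain ⟨i, hi, hieq⟩ := (hc.sameCycle (Equiv.Perm.mem_support.1 hx₀)
        (Equiv.Perm.mem_support.1 hy)).exists_pow_eq'
      exact ⟨i, Finset.mem_range.2 (horder ▸ hi), hieq⟩
  have hwrap : ∀ i, φ ((i + 1) % n) = c (φ i) := by
    intro i
    show (c ^ ((i + 1) % n)) x₀ = c ((c ^ i) x₀)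
    rw [← horder, pow_mod_orderOf, pow_succ', Equiv.Perm.mul_apply]
  apply Finset.card_bij (fun S _ => S.image φ)
  · -- maps into
    intro S hS
    rw [mem_cycSets] at hS
    obtain ⟨hsub, hcard, hcond⟩ := hS
    rw [Finset.mem_filter, Finset.mem_powerset]
    have hsub' : S.image φ ⊆ c.support := by
      rw [← himg]
      exact Finset.image_subset_image hsub
    refine ⟨hsub', ?_, ?_⟩
    · rw [Finset.card_image_of_injOn, hcard]
      intro a ha b hb hab
      exact hinj a (Finset.mem_range.1 (hsub ha)) b (Finset.mem_range.1 (hsub hb)) hab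
    · intro b hb hcb
      rw [Finset.mem_image] at hb hcb
      obtain ⟨i, hi, rfl⟩ := hb
      obtain ⟨i', hi', heq⟩ := hcb
      rw [← hwrap i] at heq
      have : i' = (i + 1) % n := hinj i' (Finset.mem_range.1 (hsub hi'))
        ((i + 1) % n) (Nat.mod_lt _ (by omega)) heq
      exact hcond i hi (this ▸ hi')
  · -- injective
    intro S hS T hT heq
    rw [mem_cycSets] at hS hT
    ext i
    constructor
    · intro hi
      have : φ i ∈ T.image φ := heq ▸ Finset.mem_image_of_mem φ hi
      rw [Finset.mem_image] at this
      obtain ⟨i', hi', heq'⟩ := this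
      have := hinj i' (Finset.mem_range.1 (hT.1 hi')) i (Finset.mem_range.1 (hS.1 hi)) heq'
      exact this ▸ hi'
    · intro hi
      have : φ i ∈ S.image φ := heq ▸ Finset.mem_image_of_mem φ hi
      rw [Finset.mem_image] at this
      obtain ⟨i', hi', heq'⟩ := this
      have := hinj i' (Finset.mem_range.1 (hS.1 hi')) i (Finset.mem_range.1 (hT.1 hi)) heq'
      exact this ▸ hi'
  · -- surjective
    intro A hA
    rw [Finset.mem_filter, Finset.mem_powerset] at hA
    obtain ⟨hAsub, hAcard, hAcond⟩ := hA
    refine ⟨(Finset.range n).filter (fun i => φ i ∈ A), ?_, ?_⟩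
    · rw [mem_cycSets]
      have himgS : ((Finset.range n).filter (fun i => φ i ∈ A)).image φ = A := by
        apply Finset.Subset.antisymm
        · intro y hy
          rw [Finset.mem_image] at hy
          obtain ⟨i, hi, rfl⟩ := hy
          exact (Finset.mem_filter.1 hi).2
        · intro a ha
          have : a ∈ (Finset.range n).image φ := himg ▸ hAsub ha
          rw [Finset.mem_image] at this
          obtain ⟨i, hi, rfl⟩ := this
          exact Finset.mem_image_of_mem φ (Finset.mem_filter.2 ⟨hi, ha⟩)
      refine ⟨Finset.filter_subset _ _, ?_, ?_⟩
      · have hcardeq : ((Finset.range n).filter (fun i => φ i ∈ A)).card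
            = (((Finset.range n).filter (fun i => φ i ∈ A)).image φ).card := by
          rw [Finset.card_image_of_injOn]
          intro a ha b hb hab
          have ha' := Finset.mem_range.1 (Finset.mem_of_mem_filter _ ha)
          have hb' := Finset.mem_range.1 (Finset.mem_of_mem_filter _ hb)
          exact hinj a ha' b hb' hab
        rw [hcardeq, himgS, hAcard]
      · intro i hi hmod
        rw [Finset.mem_filter] at hi hmod
        have := hAcond (φ i) hi.2
        rw [← hwrap i] at this
        exact this hmod.2
    · -- image equals A  (recompute)
      apply Finset.Subset.antisymm
      · intro y hy
        rw [Finset.mem_image] at hy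
        obtain ⟨i, hi, rfl⟩ := hy
        exact (Finset.mem_filter.1 hi).2
      · intro a ha
        have : a ∈ (Finset.range n).image φ := himg ▸ hAsub ha
        rw [Finset.mem_image] at this
        obtain ⟨i, hi, rfl⟩ := this
        exact Finset.mem_image_of_mem φ (Finset.mem_filter.2 ⟨hi, ha⟩)

end Enumeration

/-- Let `1 ≤ s ≤ j−1`, `0 ≤ r ≤ j−2`, and let `ρ ∈ S_h` have cycle type
`(2^r, j+1−r)`. Then the number of factorizations `ρ = στ` with `σ` of cycle type
`(2^s)` and `τ` a single `(j+1−s)`-cycle, multiplied by `j+1−s`, equals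
`(j+1−r)·binom(j+1−s, s−r)`. -/
theorem count_factorizations (h j s r : ℕ) (hs1 : 1 ≤ s) (hs2 : s ≤ j - 1)
    (hr : r ≤ j - 2) (ρ : Equiv.Perm (Fin h))
    (hρ : ρ.cycleType = Multiset.replicate r 2 + {j + 1 - r}) :
    (Finset.univ.filter
        (fun p : Equiv.Perm (Fin h) × Equiv.Perm (Fin h) =>
          p.1.cycleType = Multiset.replicate s 2 ∧
          p.2.cycleType = {j + 1 - s} ∧ p.1 * p.2 = ρ)).card * (j + 1 - s) =
      (j + 1 - r) * binom ((j : ℤ) + 1 - s) ((s : ℤ) - r) := by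
  have hj2 : 2 ≤ j := by omega
  set n := j + 1 - r with hn_def
  set m := j + 1 - s with hm_def
  have hn3 : 3 ≤ n := by omega
  have hm2 : 2 ≤ m := by omega
  -- extract the long cycle from ρ
  have hmem_n : n ∈ ρ.cycleType := by
    rw [hρ]
    exact Multiset.mem_add.2 (Or.inr (Multiset.mem_singleton_self n))
  rw [Equiv.Perm.cycleType_def, Multiset.mem_map] at hmem_n
  obtain ⟨c0, hc0v, hc0card⟩ := hmem_n
  have hc0mem : c0 ∈ ρ.cycleFactorsFinset := hc0v
  have hc : c0.IsCycle := (Equiv.Perm.mem_cycleFactorsFinset_iff.1 hc0mem).1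
  have hcn : c0.support.card = n := hc0card
  set δ := ρ * c0⁻¹ with hδ_def
  have hdisj : Equiv.Perm.Disjoint δ c0 :=
    Equiv.Perm.disjoint_mul_inv_of_mem_cycleFactorsFinset hc0mem
  have hρeq : ρ = δ * c0 := by rw [hδ_def, inv_mul_cancel_right]
  have hc0ct : c0.cycleType = {n} := by
    rw [hc.cycleType, hcn]
  have hδct : δ.cycleType = Multiset.replicate r 2 := by
    rw [hδ_def, Equiv.Perm.cycleType_mul_inv_mem_cycleFactorsFinset_eq_sub hc0mem, hρ, hc0ct,
      add_tsub_cancel_right]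
  have hρcard : ρ.support.card = 2 * r + n := by
    rw [← Equiv.Perm.sum_cycleType, hρ, Multiset.sum_add, Multiset.sum_replicate,
      Multiset.sum_singleton, smul_eq_mul]
    ring
  by_cases hrs : r ≤ s
  · -- main case
    set k := s - r with hk_def
    have hsrk : s = r + k := by omega
    have hnm : n = m + k := by omega
    have hcard1 : (Finset.univ.filter
        (fun p : Equiv.Perm (Fin h) × Equiv.Perm (Fin h) =>
          p.1.cycleType = Multiset.replicate s 2 ∧
          p.2.cycleType = {m} ∧ p.1 * p.2 = ρ)).card =
        (Finset.univ.filter (fun σ : Equiv.Perm (Fin h) =>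
          σ.cycleType = Multiset.replicate s 2 ∧ (σ * ρ).cycleType = {m})).card := by
      apply Finset.card_bij' (fun p _ => p.1) (fun σ _ => (σ, σ * ρ))
      · intro p hp
        rw [Finset.mem_filter] at hp ⊢
        obtain ⟨-, h1, h2, h3⟩ := hp
        refine ⟨Finset.mem_univ _, h1, ?_⟩
        rw [← h3, ← mul_assoc, mul_self_eq_one_of_cycleType h1, one_mul]
        exact h2
      · intro σ hσ
        rw [Finset.mem_filter] at hσ ⊢
        obtain ⟨-, h1, h2⟩ := hσ
        refine ⟨Finset.mem_univ _, h1, h2, ?_⟩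
        rw [← mul_assoc, mul_self_eq_one_of_cycleType h1, one_mul]
      · intro p hp
        rw [Finset.mem_filter] at hp
        obtain ⟨-, h1, h2, h3⟩ := hp
        ext : 1
        · rfl
        · show p.1 * ρ = p.2
          rw [← h3, ← mul_assoc, mul_self_eq_one_of_cycleType h1, one_mul]
      · intro σ hσ
        rfl
    have hcard2 : (Finset.univ.filter (fun σ : Equiv.Perm (Fin h) =>
          σ.cycleType = Multiset.replicate s 2 ∧ (σ * ρ).cycleType = {m})).card =
        (c0.support.powerset.filter (fun A => A.card = k ∧ ∀ b ∈ A, c0 b ∉ A)).card := by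
      apply Finset.card_bij' (fun σ _ => c0.support.filter (fun b => σ b = c0 b))
        (fun A _ => δ * swapProd c0 A)
      · intro σ hσ
        rw [Finset.mem_filter] at hσ
        obtain ⟨-, h1, h2⟩ := hσ
        obtain ⟨hk1, hk2, hk3⟩ := structure_fwd hdisj hρeq hδct hc hcn hn3 hm2 hnm
          (by rw [h1, hsrk]) h2
        rw [Finset.mem_filter, Finset.mem_powerset]
        exact ⟨Finset.filter_subset _ _, hk1, hk2⟩
      · intro A hA
        rw [Finset.mem_filter, Finset.mem_powerset] at hA
        obtain ⟨hA1, hA2, hA3⟩ := hA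
        obtain ⟨hb1, hb2, hb3⟩ := structure_bwd hdisj hρeq hδct hc hcn hn3 hm2 hnm hA1 hA3 hA2
        rw [Finset.mem_filter]
        refine ⟨Finset.mem_univ _, ?_, hb2⟩
        rw [hb1, hsrk]
      · intro σ hσ
        rw [Finset.mem_filter] at hσ
        obtain ⟨-, h1, h2⟩ := hσ
        obtain ⟨hk1, hk2, hk3⟩ := structure_fwd hdisj hρeq hδct hc hcn hn3 hm2 hnm
          (by rw [h1, hsrk]) h2
        exact hk3.symm
      · intro A hA
        rw [Finset.mem_filter, Finset.mem_powerset] at hA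
        obtain ⟨hA1, hA2, hA3⟩ := hA
        obtain ⟨hb1, hb2, hb3⟩ := structure_bwd hdisj hρeq hδct hc hcn hn3 hm2 hnm hA1 hA3 hA2
        exact hb3
    have hcard3 := card_Asets_eq c0 hc hcn hn3 k
    have hcount := cycSets_count n k hn3 (by omega)
    have hbinom : binom ((j : ℤ) + 1 - s) ((s : ℤ) - r) = Nat.choose m k := by
      by_cases hkm : k ≤ m
      · rw [binom, if_pos ⟨by omega, by omega⟩]
        have e1 : ((j : ℤ) + 1 - s).toNat = m := by omega
        have e2 : ((s : ℤ) - r).toNat = k := by omega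
        rw [e1, e2]
      · rw [binom, if_neg, Nat.choose_eq_zero_of_lt (by omega)]
        rintro ⟨h1, h2⟩
        omega
    have hx : (c0.support.powerset.filter (fun A => A.card = k ∧ ∀ b ∈ A, c0 b ∉ A)).card
        = (cycSets n k).card := by
      refine Eq.trans ?_ hcard3.symm
      congr 1
      exact (Finset.filter_congr_decidable _ _ _).symm
    rw [hcard1, hcard2, hx, hbinom]
    have hnk : n - k = m := by omega
    rw [hnk] at hcount
    exact hcount
  · -- r > s : no factorizations
    have hempty : (Finset.univ.filter
        (fun p : Equiv.Perm (Fin h) × Equiv.Perm (Fin h) =>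
          p.1.cycleType = Multiset.replicate s 2 ∧
          p.2.cycleType = {m} ∧ p.1 * p.2 = ρ)) = ∅ := by
      apply Finset.eq_empty_of_forall_notMem
      intro p hp
      rw [Finset.mem_filter] at hp
      obtain ⟨-, h1, h2, h3⟩ := hp
      have c1 : p.1.support.card = 2 * s := by
        rw [← Equiv.Perm.sum_cycleType, h1, Multiset.sum_replicate, smul_eq_mul]
        ring
      have c2 : p.2.support.card = m := by
        rw [← Equiv.Perm.sum_cycleType, h2, Multiset.sum_singleton]
      have hsub : ρ.support ⊆ p.1.support ∪ p.2.support := by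
        rw [← h3]
        exact Equiv.Perm.support_mul_le p.1 p.2
      have hle := (Finset.card_le_card hsub).trans (Finset.card_union_le _ _)
      rw [hρcard, c1, c2] at hle
      omega
    rw [hempty, Finset.card_empty, Nat.zero_mul, binom, if_neg]
    · ring
    · rintro ⟨h1, -⟩
      omega
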